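/- Under assumptions (a)–(d) with parameter ε ≥ 0, the decoupled estimate ẑ* satisfies z* ≤ ẑ* + 2ε; combined with the upper bound this yields |z* − ẑ*| ≤ 2ε. -/

import Mathlib

open scoped RealInnerProductSpace

/-- Under assumptions (a)–(d) with parameter `ε ≥ 0`, the decoupled estimate
`ẑ* = max_{0 ≤ τ ≤ R} (⟪c, x̃_τ⟫ + E_ξ Q((‖x̃_τ‖, 0, …, 0)ᵀ, ξ))` satisfies
`z* ≤ ẑ* + 2ε`; combined with the upper bound this yields `|z* − ẑ*| ≤ 2ε`. -/
theorem decoupled_two_sided_bound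
    {m₁ n₁ m₂ n₂ : ℕ} [NeZero n₁] {ι : Type*} [Fintype ι]
    (A : Matrix (Fin m₁) (Fin n₁) ℝ) (b : Fin m₁ → ℝ) (c : EuclideanSpace ℝ (Fin n₁))
    -- scenario probabilities
    (P : ι → ℝ) (hP0 : ∀ ξ, 0 ≤ P ξ) (hP1 : ∑ ξ, P ξ = 1)
    -- second stage data
    (q : ι → EuclideanSpace ℝ (Fin n₂)) (W : ι → Matrix (Fin m₂) (Fin n₂) ℝ)
    (h : ι → Fin m₂ → ℝ) (T : ι → Matrix (Fin m₂) (Fin n₁) ℝ)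
    (ε : ℝ) (hε : 0 ≤ ε)
    -- R = max norm over the (nonempty bounded) first-stage feasible set
    (R : ℝ)
    (hR : IsGreatest {r : ℝ | ∃ x : EuclideanSpace ℝ (Fin n₁),
      A.mulVec x ≤ b ∧ (∀ i, 0 ≤ x i) ∧ r = ‖x‖} R)
    -- (a) unique optimal solutions x̃_τ of the τ-constrained first-stage problem
    (xτ : ℝ → EuclideanSpace ℝ (Fin n₁))
    (hxτ_feas : ∀ τ, 0 ≤ τ →
      A.mulVec (xτ τ) ≤ b ∧ (∀ i, 0 ≤ xτ τ i) ∧ ‖xτ τ‖ ≤ τ)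
    (hxτ_opt : ∀ τ, 0 ≤ τ → ∀ x : EuclideanSpace ℝ (Fin n₁),
      A.mulVec x ≤ b → (∀ i, 0 ≤ x i) → ‖x‖ ≤ τ → ⟪c, x⟫ ≤ ⟪c, xτ τ⟫)
    (hxτ_uniq : ∀ τ, 0 ≤ τ → ∀ x : EuclideanSpace ℝ (Fin n₁),
      A.mulVec x ≤ b → (∀ i, 0 ≤ x i) → ‖x‖ ≤ τ → ⟪c, x⟫ = ⟪c, xτ τ⟫ → x = xτ τ)
    -- (b) for every x with ‖x‖ ≤ R and every scenario ξ, the recourse problem is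
    -- feasible and bounded, with Q x ξ its (attained) optimal value
    (Q : EuclideanSpace ℝ (Fin n₁) → ι → ℝ)
    (hQ : ∀ x : EuclideanSpace ℝ (Fin n₁), ‖x‖ ≤ R → ∀ ξ,
      IsGreatest {r : ℝ | ∃ y : EuclideanSpace ℝ (Fin n₂),
        (∀ j, 0 ≤ y j) ∧ (W ξ).mulVec y ≤ h ξ - (T ξ).mulVec x ∧ r = ⟪q ξ, y⟫} (Q x ξ))
    -- (c) approximate rotational invariance
    (hrot : ∀ x : EuclideanSpace ℝ (Fin n₁), ‖x‖ ≤ R →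
      |(∑ ξ, P ξ * Q x ξ) -
        (∑ ξ, P ξ * Q (EuclideanSpace.single (0 : Fin n₁) ‖x‖) ξ)| ≤ ε)
    -- (d) approximate monotonicity past ‖x̃‖ (with x̃ = x̃_R the first-stage optimum)
    (hmono : ∀ τ₁ τ₂ : ℝ, ‖xτ R‖ ≤ τ₁ → τ₁ ≤ τ₂ → τ₂ ≤ R →
      (∑ ξ, P ξ * Q (EuclideanSpace.single (0 : Fin n₁) τ₂) ξ) - ε ≤
        ∑ ξ, P ξ * Q (EuclideanSpace.single (0 : Fin n₁) τ₁) ξ)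
    -- z* : optimal value of the two-stage program
    (zstar : ℝ)
    (hzstar : IsGreatest {v : ℝ | ∃ x : EuclideanSpace ℝ (Fin n₁),
      A.mulVec x ≤ b ∧ (∀ i, 0 ≤ x i) ∧ v = ⟪c, x⟫ + ∑ ξ, P ξ * Q x ξ} zstar)
    -- ẑ* : decoupled estimate
    (zhat : ℝ)
    (hzhat : IsGreatest {v : ℝ | ∃ τ ∈ Set.Icc (0 : ℝ) R,
      v = ⟪c, xτ τ⟫ +
        ∑ ξ, P ξ * Q (EuclideanSpace.single (0 : Fin n₁) ‖xτ τ‖) ξ} zhat) :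
    zstar ≤ zhat + 2 * ε ∧ |zstar - zhat| ≤ 2 * ε := by
  -- basic facts about R
  obtain ⟨x₀, hA0, hx00, hR0eq⟩ := hR.1
  have hR0 : (0 : ℝ) ≤ R := hR0eq ▸ norm_nonneg _
  -- the optimal first stage point
  obtain ⟨xs, hAxs, hxs0, hzeq⟩ := hzstar.1
  have hxsR : ‖xs‖ ≤ R := hR.2 ⟨xs, hAxs, hxs0, rfl⟩
  set τ : ℝ := ‖xs‖ with hτdef
  have hτ0 : (0 : ℝ) ≤ τ := norm_nonneg _
  obtain ⟨hAu, hu0, huτ⟩ := hxτ_feas τ hτ0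
  have hcxs : ⟪c, xs⟫ ≤ ⟪c, xτ τ⟫ := hxτ_opt τ hτ0 xs hAxs hxs0 le_rfl
  have hrot1 : (∑ ξ, P ξ * Q xs ξ) ≤
      (∑ ξ, P ξ * Q (EuclideanSpace.single (0 : Fin n₁) τ) ξ) + ε := by
    have := abs_le.1 (hrot xs hxsR)
    linarith [this.2]
  -- upper bound : zhat ≤ zstar + ε
  have hub : zhat ≤ zstar + ε := by
    obtain ⟨τ₀, hτ₀, hzhateq⟩ := hzhat.1
    obtain ⟨hA0', h00', hn0'⟩ := hxτ_feas τ₀ hτ₀.1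
    have hnR : ‖xτ τ₀‖ ≤ R := hn0'.trans hτ₀.2
    have h1 : (∑ ξ, P ξ * Q (EuclideanSpace.single (0 : Fin n₁) ‖xτ τ₀‖) ξ) ≤
        (∑ ξ, P ξ * Q (xτ τ₀) ξ) + ε := by
      have := abs_le.1 (hrot (xτ τ₀) hnR)
      linarith [this.1]
    have h2 : ⟪c, xτ τ₀⟫ + ∑ ξ, P ξ * Q (xτ τ₀) ξ ≤ zstar :=
      hzstar.2 ⟨xτ τ₀, hA0', h00', rfl⟩
    linarith [hzhateq ▸ (le_refl zhat)]
  -- lower bound : zstar ≤ zhat + 2ε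
  have hlb : zstar ≤ zhat + 2 * ε := by
    rcases eq_or_lt_of_le huτ with heqτ | hltτ
    · -- ‖xτ τ‖ = τ : use τ itself in zhat
      have hmem : ⟪c, xτ τ⟫ +
          ∑ ξ, P ξ * Q (EuclideanSpace.single (0 : Fin n₁) ‖xτ τ‖) ξ ≤ zhat :=
        hzhat.2 ⟨τ, ⟨hτ0, hτdef ▸ hxsR⟩, rfl⟩
      rw [heqτ] at hmem
      linarith
    · -- ‖xτ τ‖ < τ : then xτ τ = xτ R
      have hτR : τ ≤ R := hxsR
      have hopt : ∀ x : EuclideanSpace ℝ (Fin n₁), A.mulVec x ≤ b →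
          (∀ i, 0 ≤ x i) → ‖x‖ ≤ R → ⟪c, x⟫ ≤ ⟪c, xτ τ⟫ := by
        intro x hAx hx0 hxR
        set s : ℝ := ‖xτ τ‖ with hsdef
        have hsR : s < R := lt_of_lt_of_le hltτ hτR
        have hden : (0 : ℝ) < R - s := by linarith
        set t : ℝ := (τ - s) / (R - s) with htdef
        have ht0 : 0 < t := div_pos (by linarith) hden
        have ht1 : t ≤ 1 := by
          rw [htdef, div_le_one hden]; linarith
        set x' : EuclideanSpace ℝ (Fin n₁) := (1 - t) • xτ τ + t • x with hx'def
        have hAx' : A.mulVec x' ≤ b := by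
          intro i
          have : A.mulVec x' = (1 - t) • A.mulVec (xτ τ) + t • A.mulVec x := by
            rw [hx'def, WithLp.ofLp_add, WithLp.ofLp_smul, WithLp.ofLp_smul, Matrix.mulVec_add, Matrix.mulVec_smul, Matrix.mulVec_smul]
          rw [this]
          have h1 := hAu i
          have h2 := hAx i
          simp only [Pi.add_apply, Pi.smul_apply, smul_eq_mul]
          nlinarith
        have hx'0 : ∀ i, 0 ≤ x' i := by
          intro i
          have : x' i = (1 - t) * xτ τ i + t * x i := by
            simp [hx'def]
          rw [this]
          have := hu0 i
          have := hx0 i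
          nlinarith
        have hx'τ : ‖x'‖ ≤ τ := by
          have hle : ‖x'‖ ≤ (1 - t) * s + t * ‖x‖ := by
            calc ‖x'‖ ≤ ‖(1 - t) • xτ τ‖ + ‖t • x‖ := norm_add_le _ _
              _ = |1 - t| * s + |t| * ‖x‖ := by rw [norm_smul, norm_smul]; simp [Real.norm_eq_abs, hsdef]
              _ = (1 - t) * s + t * ‖x‖ := by
                  rw [abs_of_nonneg (by linarith), abs_of_nonneg ht0.le]
          have hts : t * (R - s) = τ - s := div_mul_cancel₀ _ (ne_of_gt hden)
          have hs0 : (0 : ℝ) ≤ s := norm_nonneg _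
          nlinarith [ht0.le]
        have := hxτ_opt τ hτ0 x' hAx' hx'0 hx'τ
        have hinner : ⟪c, x'⟫ = (1 - t) * ⟪c, xτ τ⟫ + t * ⟪c, x⟫ := by
          rw [hx'def, inner_add_right, real_inner_smul_right, real_inner_smul_right]
        rw [hinner] at this
        nlinarith
      have hxτRfeas := hxτ_feas R hR0
      have heq : xτ τ = xτ R := by
        apply hxτ_uniq R hR0 (xτ τ) hAu hu0 (huτ.trans hτR)
        exact le_antisymm (hxτ_opt R hR0 (xτ τ) hAu hu0 (huτ.trans hτR))
          (hopt (xτ R) hxτRfeas.1 hxτRfeas.2.1 hxτRfeas.2.2)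
      have hnormR : ‖xτ R‖ ≤ τ := by rw [← heq]; exact huτ
      have hmono' := hmono (‖xτ R‖) τ le_rfl hnormR hτR
      have hmem : ⟪c, xτ R⟫ +
          ∑ ξ, P ξ * Q (EuclideanSpace.single (0 : Fin n₁) ‖xτ R‖) ξ ≤ zhat :=
        hzhat.2 ⟨R, ⟨hR0, le_rfl⟩, rfl⟩
      have hceq : ⟪c, xτ τ⟫ = ⟪c, xτ R⟫ := by rw [heq]
      linarith
  refine ⟨hlb, abs_sub_le_iff.2 ⟨by linarith, by linarith⟩⟩
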